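/- Let t > 0 and F(x) = |x| + (x − t)²/(2t). Then the normalized mean satisfies lim_{T→0⁺} (1/√T) · (∫_ℝ x·exp(−F(x)/T) dx) / (∫_ℝ exp(−F(x)/T) dx) = √(2t/π), and the normalized second moment satisfies lim_{T→0⁺} (1/T) · (∫_ℝ x²·exp(−F(x)/T) dx) / (∫_ℝ exp(−F(x)/T) dx) = t. That is, for y = t the bias of X_T(t,t) is asymptotically √T·E[|N(0,t)|] = √(2Tt/π) and its mean square error is asymptotically T·t. -/

import Mathlib

open Filter MeasureTheory
open Set Real


lemma aux_exp_int (n : ℕ) {c : ℝ} (hc : 0 < c) :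
    IntegrableOn (fun x : ℝ => x ^ n * Real.exp (-(c * x))) (Set.Ioi 0) ∧
    ∫ x in Set.Ioi (0:ℝ), x ^ n * Real.exp (-(c * x)) = (Nat.factorial n : ℝ) / c ^ (n + 1) := by
  have hn : (-1:ℝ) < (n:ℝ) := by exact lt_of_lt_of_le (by norm_num) (Nat.cast_nonneg n)
  have h1 : IntegrableOn (fun x : ℝ => x ^ (n:ℝ) * Real.exp (-c * x ^ (1:ℝ))) (Set.Ioi 0) :=
    integrableOn_rpow_mul_exp_neg_mul_rpow hn zero_lt_one hc
  have heq : (fun x : ℝ => x ^ (n:ℝ) * Real.exp (-c * x ^ (1:ℝ)))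
      = fun x : ℝ => x ^ n * Real.exp (-(c * x)) := by
    funext x; rw [Real.rpow_natCast, Real.rpow_one, neg_mul]
  constructor
  · rwa [heq] at h1
  · have h2 := integral_rpow_mul_exp_neg_mul_rpow (by norm_num : (0:ℝ) < 1) hn hc
    rw [heq] at h2
    rw [h2]
    rw [show ((n:ℝ)+1)/1 = ((n:ℝ)+1) by ring, Real.Gamma_nat_eq_factorial n]
    have : c ^ (-((n:ℝ) + 1) / 1) = (c ^ (n+1) : ℝ)⁻¹ := by
      rw [div_one, Real.rpow_neg hc.le]
      congr 1
      rw [show ((n:ℝ) + 1) = ((n+1 : ℕ) : ℝ) by push_cast; ring, Real.rpow_natCast]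
    rw [this]
    field_simp

lemma aux_gauss1 {b : ℝ} (hb : 0 < b) :
    ∫ x in Set.Ioi (0:ℝ), x * Real.exp (-b * x ^ 2) = 1 / (2 * b) := by
  have h := integral_rpow_mul_exp_neg_mul_rpow (by norm_num : (0:ℝ) < 2)
    (by norm_num : (-1:ℝ) < 1) hb
  have heq : (fun x : ℝ => x ^ (1:ℝ) * Real.exp (-b * x ^ (2:ℝ)))
      = fun x : ℝ => x * Real.exp (-b * x ^ 2) := by
    funext x
    rw [Real.rpow_one, show (2:ℝ) = ((2:ℕ):ℝ) by norm_num, Real.rpow_natCast]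
  rw [← heq]
  rw [show ∫ x in Set.Ioi (0:ℝ), x ^ (1:ℝ) * Real.exp (-b * x ^ (2:ℝ)) =
    b ^ (-((1:ℝ) + 1) / 2) * (1 / 2) * Real.Gamma (((1:ℝ) + 1) / 2) from h]
  rw [show (-((1:ℝ)+1)/2) = (-1:ℝ) by norm_num, show (((1:ℝ)+1)/2) = (1:ℝ) by norm_num,
    Real.Gamma_one, Real.rpow_neg_one]
  field_simp

lemma aux_gauss2 {b : ℝ} (hb : 0 < b) :
    ∫ x in Set.Ioi (0:ℝ), x ^ 2 * Real.exp (-b * x ^ 2)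
      = Real.sqrt (Real.pi / b) / (4 * b) := by
  have h := integral_rpow_mul_exp_neg_mul_rpow (by norm_num : (0:ℝ) < 2)
    (by norm_num : (-1:ℝ) < 2) hb
  have heq : (fun x : ℝ => x ^ (2:ℝ) * Real.exp (-b * x ^ (2:ℝ)))
      = fun x : ℝ => x ^ 2 * Real.exp (-b * x ^ 2) := by
    funext x
    rw [show (2:ℝ) = ((2:ℕ):ℝ) by norm_num, Real.rpow_natCast]
  rw [← heq]
  rw [show ∫ x in Set.Ioi (0:ℝ), x ^ (2:ℝ) * Real.exp (-b * x ^ (2:ℝ)) =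
    b ^ (-((2:ℝ) + 1) / 2) * (1 / 2) * Real.Gamma (((2:ℝ) + 1) / 2) from h]
  have hg : Real.Gamma (((2:ℝ) + 1) / 2) = Real.sqrt Real.pi / 2 := by
    rw [show ((2:ℝ)+1)/2 = 1/2 + 1 by norm_num, Real.Gamma_add_one (by norm_num),
      Real.Gamma_one_half_eq]
    ring
  rw [hg]
  have hbp : b ^ (-((2:ℝ) + 1) / 2) = (Real.sqrt b * b)⁻¹ := by
    rw [show (-((2:ℝ)+1)/2) = -(1/2 + 1) by norm_num, Real.rpow_neg hb.le,
      Real.rpow_add hb, Real.rpow_one, ← Real.sqrt_eq_rpow]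
  rw [hbp, Real.sqrt_div Real.pi_pos.le]
  have h1 : Real.sqrt b ≠ 0 := by positivity
  rw [div_div, eq_div_iff (by positivity : Real.sqrt b * (4*b) ≠ 0), mul_inv]
  field_simp
  norm_num

lemma aux_pow_gauss_integrable (n : ℕ) {b : ℝ} (hb : 0 < b) :
    Integrable (fun x : ℝ => x ^ n * Real.exp (-b * x ^ 2)) := by
  have h := integrable_rpow_mul_exp_neg_mul_sq hb
    (show (-1:ℝ) < (n:ℝ) from lt_of_lt_of_le (by norm_num) (Nat.cast_nonneg n))
  have heq : (fun x : ℝ => x ^ (n:ℝ) * Real.exp (-b * x ^ 2))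
      = fun x : ℝ => x ^ n * Real.exp (-b * x ^ 2) := by
    funext x; rw [Real.rpow_natCast]
  rwa [heq] at h

lemma aux_integrable (n : ℕ) {b T : ℝ} (hb : 0 < b) (hT : 0 < T) :
    Integrable (fun x : ℝ =>
      x ^ n * (Real.exp (-b * x ^ 2) * Real.exp (-(|x| - x) / T))) := by
  refine Integrable.mono' ((aux_pow_gauss_integrable n hb).abs)
    ?_ (ae_of_all _ fun x => ?_)
  · exact (Continuous.aestronglyMeasurable (by fun_prop))
  · rw [Real.norm_eq_abs, abs_mul, abs_mul, abs_of_nonneg (Real.exp_pos _).le,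
      abs_of_nonneg (Real.exp_pos _).le, abs_mul]
    have h1 : Real.exp (-(|x| - x) / T) ≤ 1 := by
      rw [Real.exp_le_one_iff]
      apply div_nonpos_of_nonpos_of_nonneg _ hT.le
      simp [abs_nonneg, sub_nonneg, le_abs_self]
    calc |x ^ n| * (Real.exp (-b * x ^ 2) * Real.exp (-(|x| - x) / T))
        ≤ |x ^ n| * (Real.exp (-b * x ^ 2) * 1) := by
          apply mul_le_mul_of_nonneg_left _ (abs_nonneg _)
          exact mul_le_mul_of_nonneg_left h1 (Real.exp_pos _).le
      _ = |x ^ n| * |Real.exp (-b * x ^ 2)| := by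
          rw [mul_one, abs_of_nonneg (Real.exp_pos _).le]

/-- The one-dimensional objective `F(x) = |x| + (x − y)²/(2t)`. -/
noncomputable def obj1 (y t x : ℝ) : ℝ := |x| + (x - y) ^ 2 / (2 * t)

lemma aux_split (n : ℕ) {t T : ℝ} (ht : 0 < t) (hT : 0 < T) :
    (∫ x : ℝ, x ^ n * Real.exp (-(obj1 t t x) / T)) =
      Real.exp (-(t / (2 * T))) *
        ((∫ x in Set.Iic (0:ℝ),
            x ^ n * (Real.exp (-(1/(2*t*T)) * x ^ 2) * Real.exp ((2/T) * x)))
          + ∫ x in Set.Ioi (0:ℝ), x ^ n * Real.exp (-(1/(2*t*T)) * x ^ 2)) := by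
  have hb : (0:ℝ) < 1/(2*t*T) := by positivity
  have hpt : ∀ x : ℝ, Real.exp (-(obj1 t t x) / T) =
      Real.exp (-(t / (2 * T))) *
        (Real.exp (-(1/(2*t*T)) * x ^ 2) * Real.exp (-(|x| - x) / T)) := by
    intro x
    rw [← Real.exp_add, ← Real.exp_add]
    congr 1
    unfold obj1
    field_simp
    ring
  have h1 : (∫ x : ℝ, x ^ n * Real.exp (-(obj1 t t x) / T)) =
      Real.exp (-(t / (2 * T))) *
        ∫ x : ℝ, x ^ n * (Real.exp (-(1/(2*t*T)) * x ^ 2) * Real.exp (-(|x| - x) / T)) := by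
    rw [← integral_const_mul]
    congr 1; funext x; rw [hpt x]; ring
  rw [h1]
  congr 1
  have hint := aux_integrable n hb hT
  rw [← intervalIntegral.integral_Iic_add_Ioi (b := (0:ℝ)) hint.integrableOn hint.integrableOn]
  congr 1
  · apply setIntegral_congr_fun measurableSet_Iic
    intro x hx
    have h2 : |x| = -x := abs_of_nonpos hx
    simp only [h2]
    congr 2
    field_simp
    ring
  · apply setIntegral_congr_fun measurableSet_Ioi
    intro x hx
    have h2 : |x| = x := abs_of_pos (by exact hx)
    simp only [h2]
    simp

lemma aux_J_bound (n : ℕ) {b c : ℝ} (hb : 0 < b) (hc : 0 < c) :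
    |∫ x in Set.Iic (0:ℝ), x ^ n * (Real.exp (-b * x ^ 2) * Real.exp (c * x))|
      ≤ (Nat.factorial n : ℝ) / c ^ (n + 1) := by
  have hcomp : (∫ x in Set.Iic (0:ℝ), x ^ n * (Real.exp (-b * x ^ 2) * Real.exp (c * x)))
      = ∫ x in Set.Ioi (0:ℝ), (-x) ^ n * (Real.exp (-b * x ^ 2) * Real.exp (-(c * x))) := by
    have h := integral_comp_neg_Iic (0:ℝ)
      (fun u : ℝ => (-u) ^ n * (Real.exp (-b * u ^ 2) * Real.exp (-(c * u))))
    simp only [neg_neg, neg_sq, mul_neg, neg_zero] at h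
    rw [← h]
  rw [hcomp, ← Real.norm_eq_abs]
  have hbd : ∀ᵐ x ∂(volume.restrict (Set.Ioi (0:ℝ))),
      ‖(-x) ^ n * (Real.exp (-b * x ^ 2) * Real.exp (-(c * x)))‖
        ≤ x ^ n * Real.exp (-(c * x)) := by
    filter_upwards [ae_restrict_mem measurableSet_Ioi] with x hx
    have hx0 : (0:ℝ) < x := hx
    rw [Real.norm_eq_abs, abs_mul, abs_pow, abs_neg, abs_of_pos hx0,
      abs_of_pos (by positivity : (0:ℝ) < Real.exp (-b * x ^ 2) * Real.exp (-(c * x)))]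
    have h1 : Real.exp (-b * x ^ 2) ≤ 1 := by
      rw [Real.exp_le_one_iff]
      nlinarith [sq_nonneg x]
    calc x ^ n * (Real.exp (-b * x ^ 2) * Real.exp (-(c * x)))
        ≤ x ^ n * (1 * Real.exp (-(c * x))) := by
          apply mul_le_mul_of_nonneg_left _ (by positivity)
          exact mul_le_mul_of_nonneg_right h1 (Real.exp_pos _).le
      _ = x ^ n * Real.exp (-(c * x)) := by ring
  exact (norm_integral_le_of_norm_le (aux_exp_int n hc).1 hbd).trans_eq (aux_exp_int n hc).2

noncomputable def auxJ (t : ℝ) (n : ℕ) (T : ℝ) : ℝ :=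
  ∫ x in Set.Iic (0:ℝ), x ^ n * (Real.exp (-(1/(2*t*T)) * x ^ 2) * Real.exp ((2/T) * x))

lemma auxJ_abs_le (t : ℝ) (n : ℕ) {T : ℝ} (ht : 0 < t) (hT : 0 < T) :
    |auxJ t n T| ≤ (Nat.factorial n : ℝ) * T ^ (n + 1) / 2 ^ (n + 1) := by
  have h := aux_J_bound n (b := 1/(2*t*T)) (c := 2/T) (by positivity) (by positivity)
  refine h.trans_eq ?_
  rw [div_pow, div_div_eq_mul_div]

lemma auxJ_tendsto0 (t : ℝ) (ht : 0 < t) :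
    Tendsto (fun T => auxJ t 0 T / Real.sqrt T) (nhdsWithin 0 (Set.Ioi 0)) (nhds 0) := by
  have hsq : Tendsto (fun T : ℝ => Real.sqrt T) (nhdsWithin 0 (Set.Ioi 0)) (nhds 0) :=
    (Real.continuous_sqrt.tendsto' 0 0 Real.sqrt_zero).mono_left nhdsWithin_le_nhds
  apply squeeze_zero_norm' (a := fun T => Real.sqrt T / 2)
  · filter_upwards [self_mem_nhdsWithin] with T hT
    have hT : (0:ℝ) < T := hT
    have h := auxJ_abs_le t 0 ht hT
    norm_num at h
    rw [Real.norm_eq_abs, abs_div, abs_of_pos (Real.sqrt_pos.mpr hT)]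
    calc |auxJ t 0 T| / Real.sqrt T ≤ (T / 2) / Real.sqrt T := by
          gcongr
      _ = Real.sqrt T / 2 := by
          rw [div_eq_div_iff (Real.sqrt_pos.mpr hT).ne' (by norm_num : (2:ℝ) ≠ 0)]
          linear_combination -Real.mul_self_sqrt hT.le
  · simpa using hsq.div_const 2

lemma auxJ_tendsto1 (t : ℝ) (ht : 0 < t) :
    Tendsto (fun T => auxJ t 1 T / T) (nhdsWithin 0 (Set.Ioi 0)) (nhds 0) := by
  have hidt : Tendsto (fun T : ℝ => T) (nhdsWithin 0 (Set.Ioi 0)) (nhds 0) :=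
    (continuous_id.tendsto' 0 0 rfl).mono_left nhdsWithin_le_nhds
  apply squeeze_zero_norm' (a := fun T : ℝ => T / 4)
  · filter_upwards [self_mem_nhdsWithin] with T hT
    have hT : (0:ℝ) < T := hT
    have h := auxJ_abs_le t 1 ht hT
    norm_num at h
    rw [Real.norm_eq_abs, abs_div, abs_of_pos hT]
    calc |auxJ t 1 T| / T ≤ (T ^ 2 / 4) / T := by gcongr
      _ = T / 4 := by
          rw [div_eq_div_iff hT.ne' (by norm_num : (4:ℝ) ≠ 0)]
          ring
  · simpa using hidt.div_const 4

lemma auxJ_tendsto2 (t : ℝ) (ht : 0 < t) :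
    Tendsto (fun T => auxJ t 2 T / (T * Real.sqrt T)) (nhdsWithin 0 (Set.Ioi 0)) (nhds 0) := by
  have hsq : Tendsto (fun T : ℝ => Real.sqrt T) (nhdsWithin 0 (Set.Ioi 0)) (nhds 0) :=
    (Real.continuous_sqrt.tendsto' 0 0 Real.sqrt_zero).mono_left nhdsWithin_le_nhds
  have hidt : Tendsto (fun T : ℝ => T) (nhdsWithin 0 (Set.Ioi 0)) (nhds 0) :=
    (continuous_id.tendsto' 0 0 rfl).mono_left nhdsWithin_le_nhds
  apply squeeze_zero_norm' (a := fun T : ℝ => T * Real.sqrt T / 4)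
  · filter_upwards [self_mem_nhdsWithin] with T hT
    have hT : (0:ℝ) < T := hT
    have hs : 0 < Real.sqrt T := Real.sqrt_pos.mpr hT
    have h := auxJ_abs_le t 2 ht hT
    norm_num at h
    rw [Real.norm_eq_abs, abs_div, abs_of_pos (by positivity : (0:ℝ) < T * Real.sqrt T)]
    calc |auxJ t 2 T| / (T * Real.sqrt T)
        ≤ (2 * T ^ 3 / 8) / (T * Real.sqrt T) := by gcongr
      _ = T * Real.sqrt T / 4 := by
          rw [div_eq_div_iff (by positivity : (T * Real.sqrt T) ≠ 0) (by norm_num : (4:ℝ) ≠ 0)]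
          linear_combination (-(T^2)) * Real.mul_self_sqrt hT.le
  · have := hidt.mul hsq
    simpa using this.div_const 4

lemma aux_sqrt_eq {t T : ℝ} (ht : 0 < t) (hT : 0 < T) :
    Real.sqrt (Real.pi / (1/(2*t*T))) = Real.sqrt (2*Real.pi*t) * Real.sqrt T := by
  rw [← Real.sqrt_mul (by positivity : (0:ℝ) ≤ 2*Real.pi*t)]
  congr 1
  field_simp

lemma aux_Z {t T : ℝ} (ht : 0 < t) (hT : 0 < T) :
    (∫ x : ℝ, Real.exp (-(obj1 t t x) / T)) =
      Real.exp (-(t / (2 * T))) *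
        (auxJ t 0 T + Real.sqrt (2*Real.pi*t) * Real.sqrt T / 2) := by
  have h : (∫ x : ℝ, Real.exp (-(obj1 t t x) / T))
      = ∫ x : ℝ, x ^ 0 * Real.exp (-(obj1 t t x) / T) := by
    congr 1; funext x; rw [pow_zero, one_mul]
  rw [h, aux_split 0 ht hT]
  congr 2
  have h2 : (∫ x in Set.Ioi (0:ℝ), x ^ 0 * Real.exp (-(1/(2*t*T)) * x ^ 2))
      = ∫ x in Set.Ioi (0:ℝ), Real.exp (-(1/(2*t*T)) * x ^ 2) := by
    congr 1; funext x; rw [pow_zero, one_mul]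
  rw [h2, integral_gaussian_Ioi, aux_sqrt_eq ht hT]

lemma aux_M1 {t T : ℝ} (ht : 0 < t) (hT : 0 < T) :
    (∫ x : ℝ, x * Real.exp (-(obj1 t t x) / T)) =
      Real.exp (-(t / (2 * T))) * (auxJ t 1 T + t * T) := by
  have h : (∫ x : ℝ, x * Real.exp (-(obj1 t t x) / T))
      = ∫ x : ℝ, x ^ 1 * Real.exp (-(obj1 t t x) / T) := by
    congr 1; funext x; rw [pow_one]
  rw [h, aux_split 1 ht hT]
  congr 2
  have h2 : (∫ x in Set.Ioi (0:ℝ), x ^ 1 * Real.exp (-(1/(2*t*T)) * x ^ 2))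
      = ∫ x in Set.Ioi (0:ℝ), x * Real.exp (-(1/(2*t*T)) * x ^ 2) := by
    congr 1; funext x; rw [pow_one]
  rw [h2, aux_gauss1 (by positivity : (0:ℝ) < 1/(2*t*T))]
  field_simp

lemma aux_M2 {t T : ℝ} (ht : 0 < t) (hT : 0 < T) :
    (∫ x : ℝ, x ^ 2 * Real.exp (-(obj1 t t x) / T)) =
      Real.exp (-(t / (2 * T))) *
        (auxJ t 2 T + Real.sqrt (2*Real.pi*t) * Real.sqrt T * (t * T) / 2) := by
  rw [aux_split 2 ht hT]
  congr 2
  rw [aux_gauss2 (by positivity : (0:ℝ) < 1/(2*t*T)), aux_sqrt_eq ht hT]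
  rw [div_eq_div_iff (by positivity : (4 * (1/(2*t*T)) : ℝ) ≠ 0) (by norm_num : (2:ℝ) ≠ 0)]
  field_simp
  ring

lemma aux_div_id {s u : ℝ} (P Q : ℝ) (hs : s ≠ 0) (hu : u ≠ 0) :
    1 / u * (P / Q) = (P / (u * s)) / (Q / s) := by
  rcases eq_or_ne Q 0 with hQ | hQ
  · simp [hQ]
  · field_simp

/-- For `y = t`, the mean of `X_T(t,t)` is asymptotically `√T·√(2t/π)` and its second
moment is asymptotically `T·t`. -/
theorem stmt18 (t : ℝ) (ht : 0 < t) :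
    Tendsto
      (fun T : ℝ =>
        1 / Real.sqrt T * ((∫ x : ℝ, x * Real.exp (-(obj1 t t x) / T)) /
          ∫ x : ℝ, Real.exp (-(obj1 t t x) / T)))
      (nhdsWithin 0 (Set.Ioi 0))
      (nhds (Real.sqrt (2 * t / Real.pi))) ∧
    Tendsto
      (fun T : ℝ =>
        1 / T * ((∫ x : ℝ, x ^ 2 * Real.exp (-(obj1 t t x) / T)) /
          ∫ x : ℝ, Real.exp (-(obj1 t t x) / T)))
      (nhdsWithin 0 (Set.Ioi 0)) (nhds t) := by
  have hs2 : (0:ℝ) < Real.sqrt (2 * Real.pi * t) := Real.sqrt_pos.mpr (by positivity)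
  have hden : Tendsto (fun T => auxJ t 0 T / Real.sqrt T + Real.sqrt (2*Real.pi*t) / 2)
      (nhdsWithin 0 (Set.Ioi 0)) (nhds (0 + Real.sqrt (2*Real.pi*t) / 2)) :=
    (auxJ_tendsto0 t ht).add tendsto_const_nhds
  have hdenne : (0:ℝ) + Real.sqrt (2*Real.pi*t) / 2 ≠ 0 := by positivity
  constructor
  · have hnum : Tendsto (fun T => auxJ t 1 T / T + t)
        (nhdsWithin 0 (Set.Ioi 0)) (nhds (0 + t)) :=
      (auxJ_tendsto1 t ht).add tendsto_const_nhds
    have hlim := hnum.div hden hdenne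
    have hval : (0 + t) / (0 + Real.sqrt (2*Real.pi*t) / 2) = Real.sqrt (2 * t / Real.pi) := by
      rw [zero_add, zero_add, eq_comm, eq_div_iff (by positivity)]
      rw [show Real.sqrt (2*Real.pi*t) / 2 = Real.sqrt (2*Real.pi*t) * (1/2) by ring,
        ← mul_assoc, ← Real.sqrt_mul (by positivity : (0:ℝ) ≤ 2*t/Real.pi),
        show (2*t/Real.pi) * (2*Real.pi*t) = (2*t)^2 by field_simp,
        Real.sqrt_sq (by positivity : (0:ℝ) ≤ 2*t)]
      ring
    rw [hval] at hlim
    apply hlim.congr'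
    filter_upwards [self_mem_nhdsWithin] with T hT
    have hT : (0:ℝ) < T := hT
    have hsT : (0:ℝ) < Real.sqrt T := Real.sqrt_pos.mpr hT
    simp only [Pi.div_apply]
    rw [aux_M1 ht hT, aux_Z ht hT, mul_div_mul_left _ _ (Real.exp_ne_zero _),
      aux_div_id (s := Real.sqrt T) _ _ hsT.ne' hsT.ne', Real.mul_self_sqrt hT.le]
    congr 1
    · field_simp
    · field_simp
  · have hnum : Tendsto (fun T => auxJ t 2 T / (T * Real.sqrt T) + Real.sqrt (2*Real.pi*t) * t / 2)
        (nhdsWithin 0 (Set.Ioi 0)) (nhds (0 + Real.sqrt (2*Real.pi*t) * t / 2)) :=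
      (auxJ_tendsto2 t ht).add tendsto_const_nhds
    have hlim := hnum.div hden hdenne
    have hval : (0 + Real.sqrt (2*Real.pi*t) * t / 2) / (0 + Real.sqrt (2*Real.pi*t) / 2) = t := by
      rw [zero_add, zero_add, div_eq_iff (by positivity)]
      ring
    rw [hval] at hlim
    apply hlim.congr'
    filter_upwards [self_mem_nhdsWithin] with T hT
    have hT : (0:ℝ) < T := hT
    have hsT : (0:ℝ) < Real.sqrt T := Real.sqrt_pos.mpr hT
    simp only [Pi.div_apply]
    rw [aux_M2 ht hT, aux_Z ht hT, mul_div_mul_left _ _ (Real.exp_ne_zero _),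
      aux_div_id (s := Real.sqrt T) _ _ hsT.ne' hT.ne']
    congr 1
    · field_simp
    · field_simp
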